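/- arXiv:2003.04385 — 6 statements merged into one kernel-verified Lean document; each statement's English description precedes it below -/
import Mathlib

section
/- If g and f are locally integrable functions on (0,∞) satisfying the Sonine equation (g ∗ f)(t) = 1 for all t > 0, and g is bounded on some interval (0,ε] with ε > 0, then a contradiction follows; i.e., a Sonine function cannot be bounded in any right neighborhood of 0. -/
open MeasureTheory Real Set Filter Topology

/-- A Sonine function cannot be bounded in any right neighborhood of 0. -/
theorem sonine_not_bounded_near_zero (g f : ℝ → ℝ)
    (hg : ∀ T > 0, IntegrableOn g (Set.Ioc 0 T))
    (hf : ∀ T > 0, IntegrableOn f (Set.Ioc 0 T))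
    (hson : ∀ t > 0, ∫ s in (0:ℝ)..t, g s * f (t - s) = 1)
    (hbdd : ∃ ε > (0:ℝ), ∃ M : ℝ, ∀ t ∈ Set.Ioc (0:ℝ) ε, |g t| ≤ M) :
    False := by
  obtain ⟨ε, hε, M, hM⟩ := hbdd
  -- the primitive of |f|
  set F : ℝ → ℝ := fun x => ∫ u in Ioc (0:ℝ) x, |f u| with hF
  have hfabs : IntegrableOn (fun u => |f u|) (Icc (0:ℝ) ε) := by
    rw [integrableOn_Icc_iff_integrableOn_Ioc]
    exact (hf ε hε).abs
  have hFcont : ContinuousOn F (Icc 0 ε) :=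
    intervalIntegral.continuousOn_primitive hfabs
  have hF0 : F 0 = 0 := by simp [hF]
  have htend : Tendsto F (𝓝[Ioc 0 ε] 0) (𝓝 0) := by
    have := (hFcont 0 ⟨le_rfl, hε.le⟩)
    rw [ContinuousWithinAt, hF0] at this
    exact this.mono_left (nhdsWithin_mono _ Ioc_subset_Icc_self)
  have hMF : ∀ᶠ t in 𝓝[Ioc 0 ε] 0, M * F t < 1 := by
    have : Tendsto (fun t => M * F t) (𝓝[Ioc 0 ε] 0) (𝓝 (M * 0)) := htend.const_mul M
    rw [mul_zero] at this
    exact this.eventually_lt_const one_pos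
  have hne : (𝓝[Ioc 0 ε] (0:ℝ)).NeBot := left_nhdsWithin_Ioc_neBot hε
  obtain ⟨t, hMFt, ht⟩ := (hMF.and (eventually_mem_nhdsWithin)).exists
  have ht0 : (0:ℝ) < t := ht.1
  -- interval integrability of the bound
  have hfint : IntervalIntegrable f volume 0 t := by
    rw [intervalIntegrable_iff_integrableOn_Ioc_of_le ht0.le]
    exact hf t ht0
  have hbint : IntervalIntegrable (fun s => M * |f (t - s)|) volume 0 t := by
    have := (hfint.comp_sub_left t).symm
    simp only [sub_zero, sub_self] at this
    exact (this.abs).const_mul M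
  -- the key estimate
  have hM0 : 0 ≤ M := le_trans (abs_nonneg (g ε)) (hM ε ⟨hε, le_rfl⟩)
  have hnn : 0 ≤ ∫ s in (0:ℝ)..t, M * |f (t - s)| :=
    intervalIntegral.integral_nonneg ht0.le fun u _ => mul_nonneg hM0 (abs_nonneg _)
  have key : |∫ s in (0:ℝ)..t, g s * f (t - s)| ≤ ∫ s in (0:ℝ)..t, M * |f (t - s)| := by
    rw [← Real.norm_eq_abs, ← abs_of_nonneg hnn]
    apply intervalIntegral.norm_integral_le_abs_of_norm_le _ hbint
    have hs : Set.uIoc (0:ℝ) t = Ioc 0 t := Set.uIoc_of_le ht0.le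
    filter_upwards [self_mem_ae_restrict (by rw [hs]; exact measurableSet_Ioc)] with s hss
    rw [hs] at hss
    have hsε : s ∈ Ioc (0:ℝ) ε := ⟨hss.1, hss.2.trans ht.2⟩
    calc ‖g s * f (t - s)‖ = |g s| * |f (t - s)| := abs_mul _ _
      _ ≤ M * |f (t - s)| := by
          exact mul_le_mul_of_nonneg_right (hM s hsε) (abs_nonneg _)
  -- compute the right hand side
  have hcomp : (∫ s in (0:ℝ)..t, |f (t - s)|) = ∫ u in (0:ℝ)..t, |f u| := by
    have := intervalIntegral.integral_comp_sub_left (fun u => |f u|) t (a := 0) (b := t)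
    simpa using this
  have hrhs : (∫ s in (0:ℝ)..t, M * |f (t - s)|) = M * F t := by
    rw [intervalIntegral.integral_const_mul, hcomp, hF,
      intervalIntegral.integral_of_le ht0.le]
  rw [hson t ht0, hrhs, abs_one] at key
  exact absurd (lt_of_le_of_lt key hMFt) (lt_irrefl 1)
end

section
/- If g, f ∈ L¹_loc([0,∞)) form a Sonine pair and both g and f are non-increasing on some interval (0,ε] with ε > 0, then g(t) → ∞ and f(t) → ∞ as t → 0⁺. -/
open MeasureTheory Real Set Filter

/-- Auxiliary lemma: the first member of a Sonine pair, if antitone near 0,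
blows up at 0⁺. -/
theorem sonine_aux (g f : ℝ → ℝ)
    (hf : ∀ T > 0, IntegrableOn f (Set.Ioc 0 T))
    (hson : ∀ t > 0, ∫ s in (0:ℝ)..t, g s * f (t - s) = 1)
    (ε : ℝ) (hε : 0 < ε)
    (hgm : AntitoneOn g (Set.Ioc 0 ε)) :
    Tendsto g (nhdsWithin 0 (Set.Ioi 0)) atTop := by
  -- It suffices to show that `g` is unbounded above on `(0, ε]`.
  suffices hub : ∀ M : ℝ, ∃ δ ∈ Set.Ioc (0:ℝ) ε, M < g δ by
    rw [tendsto_atTop]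
    intro M
    obtain ⟨δ, hδ, hMδ⟩ := hub M
    filter_upwards [Ioo_mem_nhdsGT_of_mem (by exact ⟨le_refl 0, hδ.1⟩ : (0:ℝ) ∈ Set.Ico 0 δ)]
      with t ht
    have htδ : t ∈ Set.Ioc (0:ℝ) ε := ⟨ht.1, le_trans ht.2.le hδ.2⟩
    exact le_trans hMδ.le (hgm htδ hδ ht.2.le)
  by_contra hb
  push_neg at hb
  obtain ⟨M, hM⟩ := hb
  -- so `g` is bounded on `(0, ε]` : `g ε ≤ g s ≤ M`.
  set C : ℝ := max |M| |g ε| with hC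
  have hC0 : 0 ≤ C := le_trans (abs_nonneg M) (le_max_left _ _)
  have hgbound : ∀ s ∈ Set.Ioc (0:ℝ) ε, |g s| ≤ C := by
    intro s hs
    rw [abs_le]
    constructor
    · calc -C ≤ -|g ε| := neg_le_neg (le_max_right _ _)
        _ ≤ g ε := neg_abs_le _
        _ ≤ g s := hgm hs ⟨hε, le_refl ε⟩ hs.2
    · exact le_trans (hM s hs) (le_trans (le_abs_self M) (le_max_left _ _))
  -- the integral of `|f|` over `(0,t]` tends to 0 as `t → 0⁺`
  have hfε : IntegrableOn f (Set.Ioc 0 ε) := hf ε hε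
  have hfabs : Integrable (fun x => |f x|) (volume.restrict (Set.Ioc (0:ℝ) ε)) := hfε.abs
  have hμ : Tendsto (fun t : ℝ => (volume.restrict (Set.Ioc (0:ℝ) ε)) (Set.Ioc 0 t))
      (nhdsWithin 0 (Set.Ioi 0)) (nhds 0) := by
    have h1 : Tendsto (fun t : ℝ => volume (Set.Ioc (0:ℝ) t))
        (nhdsWithin 0 (Set.Ioi 0)) (nhds 0) := by
      have : Tendsto (fun t : ℝ => ENNReal.ofReal t) (nhdsWithin 0 (Set.Ioi 0)) (nhds 0) := by
        rw [← ENNReal.ofReal_zero]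
        exact (ENNReal.continuous_ofReal.tendsto 0).comp nhdsWithin_le_nhds
      simpa [Real.volume_Ioc] using this
    refine tendsto_of_tendsto_of_tendsto_of_le_of_le tendsto_const_nhds h1
      (fun t => zero_le) (fun t => ?_)
    exact le_trans (Measure.restrict_apply_le _ _) (le_refl _)
  have htend : Tendsto (fun t : ℝ => C * ∫ x in Set.Ioc (0:ℝ) t, |f x|
      ∂(volume.restrict (Set.Ioc (0:ℝ) ε))) (nhdsWithin 0 (Set.Ioi 0)) (nhds 0) := by
    have := hfabs.tendsto_setIntegral_nhds_zero (l := nhdsWithin (0:ℝ) (Set.Ioi 0))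
      (s := fun t => Set.Ioc (0:ℝ) t) hμ
    simpa using this.const_mul C
  -- so eventually `C * ∫ |f| < 1`; pick such a `t ∈ (0, ε)`.
  have hev : ∀ᶠ t in nhdsWithin (0:ℝ) (Set.Ioi 0),
      C * (∫ x in Set.Ioc (0:ℝ) t, |f x| ∂(volume.restrict (Set.Ioc (0:ℝ) ε))) < 1 :=
    htend.eventually (eventually_lt_nhds one_pos)
  have hmem : Set.Ioo (0:ℝ) ε ∈ nhdsWithin (0:ℝ) (Set.Ioi 0) :=
    Ioo_mem_nhdsGT_of_mem ⟨le_refl 0, hε⟩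
  obtain ⟨t, ht1, ht2⟩ := (hev.and (eventually_of_mem hmem fun x hx => hx)).exists
  -- now derive the contradiction `1 ≤ C * ∫ |f| < 1`
  have htpos : 0 < t := ht2.1
  have htε : t ≤ ε := ht2.2.le
  -- rewrite the restricted integral as a plain set integral
  have hrestrict : (∫ x in Set.Ioc (0:ℝ) t, |f x| ∂(volume.restrict (Set.Ioc (0:ℝ) ε)))
      = ∫ x in Set.Ioc (0:ℝ) t, |f x| := by
    rw [Measure.restrict_restrict measurableSet_Ioc,
      Set.inter_eq_left.mpr (Set.Ioc_subset_Ioc_right htε)]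
  rw [hrestrict] at ht1
  -- integrability of the dominating function `s ↦ C * |f (t - s)|` on `(0, t]`
  have hfint : IntervalIntegrable f volume 0 t := by
    rw [intervalIntegrable_iff_integrableOn_Ioc_of_le htpos.le]
    exact hf t htpos
  have hcomp : IntervalIntegrable (fun s => f (t - s)) volume 0 t := by
    have := hfint.comp_sub_left t
    simpa using this.symm
  have hdom : IntegrableOn (fun s => C * |f (t - s)|) (Set.Ioc 0 t) := by
    have : IntervalIntegrable (fun s => C * |f (t - s)|) volume 0 t :=
      (hcomp.abs).const_mul C
    rwa [intervalIntegrable_iff_integrableOn_Ioc_of_le htpos.le] at this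
  -- the chain of inequalities
  have h1 : (1:ℝ) = ∫ s in Set.Ioc (0:ℝ) t, g s * f (t - s) := by
    rw [← hson t htpos, intervalIntegral.integral_of_le htpos.le]
  have h2 : |∫ s in Set.Ioc (0:ℝ) t, g s * f (t - s)|
      ≤ ∫ s in Set.Ioc (0:ℝ) t, |g s * f (t - s)| := by
    have := norm_integral_le_integral_norm (μ := volume.restrict (Set.Ioc (0:ℝ) t))
      (fun s => g s * f (t - s))
    simpa only [Real.norm_eq_abs] using this
  have h3 : (∫ s in Set.Ioc (0:ℝ) t, |g s * f (t - s)|)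
      ≤ ∫ s in Set.Ioc (0:ℝ) t, C * |f (t - s)| := by
    refine integral_mono_of_nonneg (Eventually.of_forall fun s => abs_nonneg _) hdom ?_
    rw [EventuallyLE, ae_restrict_iff' measurableSet_Ioc]
    refine Eventually.of_forall fun s hs => ?_
    rw [abs_mul]
    exact mul_le_mul_of_nonneg_right
      (hgbound s ⟨hs.1, le_trans hs.2 htε⟩) (abs_nonneg _)
  have h4 : (∫ s in Set.Ioc (0:ℝ) t, C * |f (t - s)|)
      = C * ∫ x in Set.Ioc (0:ℝ) t, |f x| := by
    rw [integral_const_mul, ← intervalIntegral.integral_of_le htpos.le,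
      ← intervalIntegral.integral_of_le htpos.le]
    congr 1
    have := intervalIntegral.integral_comp_sub_left (a := (0:ℝ)) (b := t)
      (fun x => |f x|) t
    simpa using this
  have : (1:ℝ) ≤ C * ∫ x in Set.Ioc (0:ℝ) t, |f x| := by
    calc (1:ℝ) = |∫ s in Set.Ioc (0:ℝ) t, g s * f (t - s)| := by rw [← h1]; simp
      _ ≤ ∫ s in Set.Ioc (0:ℝ) t, |g s * f (t - s)| := h2
      _ ≤ ∫ s in Set.Ioc (0:ℝ) t, C * |f (t - s)| := h3
      _ = C * ∫ x in Set.Ioc (0:ℝ) t, |f x| := h4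
  linarith

/-- Members of a Sonine pair, if eventually non-increasing near 0, blow up at 0⁺. -/
theorem sonine_pair_tendsto_atTop (g f : ℝ → ℝ)
    (hg : ∀ T > 0, IntegrableOn g (Set.Ioc 0 T))
    (hf : ∀ T > 0, IntegrableOn f (Set.Ioc 0 T))
    (hson : ∀ t > 0, ∫ s in (0:ℝ)..t, g s * f (t - s) = 1)
    (ε : ℝ) (hε : 0 < ε)
    (hgm : AntitoneOn g (Set.Ioc 0 ε))
    (hfm : AntitoneOn f (Set.Ioc 0 ε)) :
    Tendsto g (nhdsWithin 0 (Set.Ioi 0)) atTop ∧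
      Tendsto f (nhdsWithin 0 (Set.Ioi 0)) atTop := by
  have hson' : ∀ t > 0, ∫ s in (0:ℝ)..t, f s * g (t - s) = 1 := by
    intro t ht
    rw [← hson t ht]
    have := intervalIntegral.integral_comp_sub_left (a := (0:ℝ)) (b := t)
      (fun s => f s * g (t - s)) t
    simp only [sub_self, sub_zero] at this
    rw [← this]
    congr 1
    funext s
    rw [sub_sub_cancel, mul_comm]
  exact ⟨sonine_aux g f hf hson ε hε hgm, sonine_aux f g hg hson' ε hε hfm⟩
end

section
/- If g, f ∈ L¹_loc([0,∞)) form a Sonine pair and both g and f are non-increasing on some interval (0,ε], then t·g(t) → 0 and t·f(t) → 0 as t → 0⁺. -/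
open MeasureTheory Real Set Filter Topology

/-- Swap the roles in a convolution integral via the substitution `s ↦ t - s`. -/
lemma sonine_swap (g f : ℝ → ℝ) (t : ℝ) :
    (∫ s in (0:ℝ)..t, g s * f (t - s)) = ∫ u in (0:ℝ)..t, f u * g (t - u) := by
  have h := intervalIntegral.integral_comp_sub_left (a := (0:ℝ)) (b := t)
    (fun u => f u * g (t - u)) t
  simp only [sub_sub_cancel, sub_zero, sub_self] at h
  rw [← h]
  exact intervalIntegral.integral_congr fun x _ => by ring

/-- If the convolution is identically 1 and `g` is antitone near `0`,
then `g` blows up at `0⁺`. -/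
lemma sonine_atTop (g f : ℝ → ℝ) (ε : ℝ) (hε : 0 < ε)
    (hf : IntegrableOn f (Set.Ioc 0 ε))
    (hgm : AntitoneOn g (Set.Ioc 0 ε))
    (hson : ∀ t > 0, ∫ u in (0:ℝ)..t, f u * g (t - u) = 1) :
    Tendsto g (nhdsWithin 0 (Set.Ioi 0)) atTop := by
  rw [tendsto_atTop]
  intro M
  -- First: there is `s ∈ (0, ε]` with `M < g s`.
  have key : ∃ s ∈ Set.Ioc (0:ℝ) ε, M < g s := by
    by_contra hcon
    push_neg at hcon
    set C : ℝ := |M| + |g ε| + 1 with hC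
    have hC0 : 0 < C := by positivity
    have hbound : ∀ x ∈ Set.Ioc (0:ℝ) ε, |g x| ≤ C := by
      intro x hx
      have h1 : g x ≤ M := hcon x hx
      have h2 : g ε ≤ g x := hgm hx ⟨hε, le_refl ε⟩ hx.2
      rw [abs_le]
      constructor
      · nlinarith [abs_nonneg M, neg_abs_le (g ε)]
      · nlinarith [le_abs_self M, abs_nonneg (g ε)]
    -- the integral of |f| over Ioc 0 t tends to 0 as t = ε/(n+1) → 0
    have htend : Tendsto (fun n : ℕ => ∫ x in Set.Ioc (0:ℝ) (ε / (n + 1)), |f x|) atTop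
        (𝓝 (∫ x in ⋂ n : ℕ, Set.Ioc (0:ℝ) (ε / (n + 1)), |f x|)) := by
      apply tendsto_setIntegral_of_antitone (fun n => measurableSet_Ioc)
      · intro m n hmn
        apply Set.Ioc_subset_Ioc_right
        have hc : (m:ℝ) ≤ (n:ℝ) := Nat.cast_le.mpr hmn
        gcongr
      · exact ⟨0, (hf.mono_set (Set.Ioc_subset_Ioc_right (by
          rw [Nat.cast_zero]; linarith))).norm⟩
    have hInter : (⋂ n : ℕ, Set.Ioc (0:ℝ) (ε / (n + 1))) = ∅ := by
      rw [Set.eq_empty_iff_forall_notMem]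
      intro x hx
      simp only [Set.mem_iInter, Set.mem_Ioc] at hx
      have hx0 : 0 < x := (hx 0).1
      obtain ⟨n, hn⟩ := exists_nat_gt (ε / x)
      have h2 := (hx n).2
      have : ε / (n + 1) < x := by
        rw [div_lt_iff₀ (by positivity)]
        rw [div_lt_iff₀ hx0] at hn
        nlinarith [Nat.cast_nonneg (α := ℝ) n]
      linarith
    rw [hInter] at htend
    simp only [Measure.restrict_empty, integral_zero_measure] at htend
    obtain ⟨n, hn⟩ := (htend.eventually (gt_mem_nhds (show (0:ℝ) < 1 / C by positivity))).exists
    set t : ℝ := ε / (n + 1) with htdef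
    have ht0 : 0 < t := by positivity
    have htε : t ≤ ε := by
      rw [htdef, div_le_iff₀ (by positivity)]
      nlinarith [Nat.cast_nonneg (α := ℝ) n]
    -- the convolution integral equals 1 but is bounded by C * small
    have hco := hson t ht0
    rw [intervalIntegral.integral_of_le ht0.le] at hco
    have hint : IntegrableOn (fun u => f u * g (t - u)) (Set.Ioc 0 t) := by
      by_contra hni
      rw [MeasureTheory.integral_undef hni] at hco
      norm_num at hco
    rw [MeasureTheory.integral_Ioc_eq_integral_Ioo] at hco
    have hle : (∫ u in Set.Ioo (0:ℝ) t, f u * g (t - u)) ≤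
        ∫ u in Set.Ioo (0:ℝ) t, C * |f u| := by
      apply setIntegral_mono_on
      · exact hint.mono_set Set.Ioo_subset_Ioc_self
      · exact (((hf.mono_set (Set.Ioc_subset_Ioc_right htε)).mono_set
          Set.Ioo_subset_Ioc_self).norm.const_mul C)
      · exact measurableSet_Ioo
      · intro u hu
        have h1 : t - u ∈ Set.Ioc (0:ℝ) ε := ⟨by linarith [hu.2], by linarith [hu.1]⟩
        calc f u * g (t - u) ≤ |f u * g (t - u)| := le_abs_self _
          _ = |f u| * |g (t - u)| := abs_mul _ _
          _ ≤ |f u| * C := mul_le_mul_of_nonneg_left (hbound _ h1) (abs_nonneg _)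
          _ = C * |f u| := mul_comm _ _
    rw [hco] at hle
    rw [MeasureTheory.integral_const_mul] at hle
    rw [← MeasureTheory.integral_Ioc_eq_integral_Ioo] at hle
    have : C * ∫ u in Set.Ioc (0:ℝ) t, |f u| < C * (1 / C) :=
      mul_lt_mul_of_pos_left hn hC0
    rw [mul_one_div, div_self hC0.ne'] at this
    linarith
  obtain ⟨s, hs, hMs⟩ := key
  filter_upwards [Ioo_mem_nhdsGT_of_mem (Set.mem_Ico.mpr ⟨le_refl 0, hs.1⟩)] with t ht
  exact le_of_lt (lt_of_lt_of_le hMs (hgm ⟨ht.1, le_trans ht.2.le hs.2⟩ hs (ht.2.le)))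

/-- Key quantitative step: `t * f t ≤ (g t)⁻¹` for small `t`. -/
lemma sonine_mul_tendsto (g f : ℝ → ℝ) (ε : ℝ) (hε : 0 < ε)
    (hf : IntegrableOn f (Set.Ioc 0 ε))
    (hgm : AntitoneOn g (Set.Ioc 0 ε)) (hfm : AntitoneOn f (Set.Ioc 0 ε))
    (hson : ∀ t > 0, ∫ u in (0:ℝ)..t, f u * g (t - u) = 1)
    (hgtop : Tendsto g (nhdsWithin 0 (Set.Ioi 0)) atTop)
    (hftop : Tendsto f (nhdsWithin 0 (Set.Ioi 0)) atTop) :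
    Tendsto (fun t => t * f t) (nhdsWithin 0 (Set.Ioi 0)) (𝓝 0) := by
  have hev : ∀ᶠ t in nhdsWithin (0:ℝ) (Set.Ioi 0),
      0 ≤ t * f t ∧ t * f t ≤ (g t)⁻¹ := by
    have hg1 := hgtop.eventually (eventually_ge_atTop (1:ℝ))
    have hf1 := hftop.eventually (eventually_ge_atTop (1:ℝ))
    rw [eventually_nhdsWithin_iff] at hg1 hf1 ⊢
    obtain ⟨δg, hδg, hδgsub⟩ := Metric.eventually_nhds_iff.mp hg1
    obtain ⟨δf, hδf, hδfsub⟩ := Metric.eventually_nhds_iff.mp hf1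
    set δ : ℝ := min (min δg δf / 2) ε with hδdef
    have hδ0 : 0 < δ := lt_min (by positivity) hε
    have hδε : δ ≤ ε := min_le_right _ _
    have hgpos : ∀ x ∈ Set.Ioc (0:ℝ) δ, 1 ≤ g x := by
      intro x hx
      apply hδgsub (show dist x 0 < δg by
        rw [Real.dist_eq, sub_zero, abs_of_pos hx.1]
        calc x ≤ δ := hx.2
          _ ≤ min δg δf / 2 := min_le_left _ _
          _ < δg := by have := min_le_left δg δf; linarith) hx.1
    have hfpos : ∀ x ∈ Set.Ioc (0:ℝ) δ, 1 ≤ f x := by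
      intro x hx
      apply hδfsub (show dist x 0 < δf by
        rw [Real.dist_eq, sub_zero, abs_of_pos hx.1]
        calc x ≤ δ := hx.2
          _ ≤ min δg δf / 2 := min_le_left _ _
          _ < δf := by have := min_le_right δg δf; linarith) hx.1
    filter_upwards [Metric.eventually_nhds_iff.mpr ⟨δ, hδ0, fun {y} hy => hy⟩]
      with t ht ht0
    have htd : t < δ := by
      have := ht
      rw [Real.dist_eq, sub_zero, abs_of_pos ht0] at this
      exact this
    have htIoc : t ∈ Set.Ioc (0:ℝ) δ := ⟨ht0, htd.le⟩
    have hgt1 : 1 ≤ g t := hgpos t htIoc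
    have hft1 : 1 ≤ f t := hfpos t htIoc
    have htε : t ≤ ε := le_trans htd.le hδε
    constructor
    · exact mul_nonneg ht0.le (by linarith)
    -- main estimate
    have hco := hson t ht0
    rw [intervalIntegral.integral_of_le ht0.le] at hco
    have hint : IntegrableOn (fun u => f u * g (t - u)) (Set.Ioc 0 t) := by
      by_contra hni
      rw [MeasureTheory.integral_undef hni] at hco
      norm_num at hco
    have hfint : IntegrableOn f (Set.Ioc 0 t) := hf.mono_set (Set.Ioc_subset_Ioc_right htε)
    rw [MeasureTheory.integral_Ioc_eq_integral_Ioo] at hco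
    have step1 : g t * ∫ u in Set.Ioo (0:ℝ) t, f u ≤ 1 := by
      rw [← hco, ← MeasureTheory.integral_const_mul]
      apply setIntegral_mono_on
      · exact (hfint.mono_set Set.Ioo_subset_Ioc_self).const_mul (g t)
      · exact hint.mono_set Set.Ioo_subset_Ioc_self
      · exact measurableSet_Ioo
      · intro u hu
        have hu' : u ∈ Set.Ioc (0:ℝ) δ := ⟨hu.1, by linarith [hu.2]⟩
        have hfu : 0 ≤ f u := le_trans zero_le_one (hfpos u hu')
        have htu : t - u ∈ Set.Ioc (0:ℝ) ε := ⟨by linarith [hu.2], by linarith [hu.1]⟩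
        have hgtu : g t ≤ g (t - u) := hgm htu ⟨ht0, htε⟩ (by linarith [hu.1])
        calc g t * f u ≤ g (t - u) * f u := mul_le_mul_of_nonneg_right hgtu hfu
          _ = f u * g (t - u) := mul_comm _ _
    have step2 : t * f t ≤ ∫ u in Set.Ioo (0:ℝ) t, f u := by
      have hconst : (∫ u in Set.Ioo (0:ℝ) t, f t) = t * f t := by
        rw [setIntegral_const, measureReal_def, Real.volume_Ioo, sub_zero,
          ENNReal.toReal_ofReal ht0.le, smul_eq_mul]
      rw [← hconst]
      apply setIntegral_mono_on
      · exact (integrableOn_const_iff (C := f t)).mpr (Or.inr (by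
          rw [Real.volume_Ioo]; exact ENNReal.ofReal_lt_top))
      · exact hfint.mono_set Set.Ioo_subset_Ioc_self
      · exact measurableSet_Ioo
      · intro u hu
        exact hfm ⟨hu.1, by linarith [hu.2]⟩ ⟨ht0, htε⟩ hu.2.le
    have hgt0 : 0 < g t := lt_of_lt_of_le zero_lt_one hgt1
    rw [inv_eq_one_div, le_div_iff₀ hgt0]
    nlinarith [step1, step2]
  have hginv : Tendsto (fun t => (g t)⁻¹) (nhdsWithin (0:ℝ) (Set.Ioi 0)) (𝓝 0) :=
    hgtop.inv_tendsto_atTop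
  exact tendsto_of_tendsto_of_tendsto_of_le_of_le' tendsto_const_nhds hginv
    (hev.mono fun t h => h.1) (hev.mono fun t h => h.2)

/-- For a Sonine pair non-increasing near 0, t·g(t) → 0 and t·f(t) → 0 as t → 0⁺. -/
theorem sonine_pair_t_mul_tendsto_zero (g f : ℝ → ℝ)
    (hg : ∀ T > 0, IntegrableOn g (Set.Ioc 0 T))
    (hf : ∀ T > 0, IntegrableOn f (Set.Ioc 0 T))
    (hson : ∀ t > 0, ∫ s in (0:ℝ)..t, g s * f (t - s) = 1)
    (ε : ℝ) (hε : 0 < ε)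
    (hgm : AntitoneOn g (Set.Ioc 0 ε))
    (hfm : AntitoneOn f (Set.Ioc 0 ε)) :
    Tendsto (fun t => t * g t) (nhdsWithin 0 (Set.Ioi 0)) (nhds 0) ∧
      Tendsto (fun t => t * f t) (nhdsWithin 0 (Set.Ioi 0)) (nhds 0) := by
  have hson₂ : ∀ t > 0, ∫ u in (0:ℝ)..t, f u * g (t - u) = 1 := by
    intro t ht
    rw [← sonine_swap g f t]
    exact hson t ht
  have hson₁ : ∀ t > 0, ∫ u in (0:ℝ)..t, g u * f (t - u) = 1 := by
    intro t ht
    rw [show (∫ u in (0:ℝ)..t, g u * f (t - u)) = ∫ s in (0:ℝ)..t, g s * f (t - s) from rfl]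
    exact hson t ht
  have hgtop := sonine_atTop g f ε hε (hf ε hε) hgm hson₂
  have hftop := sonine_atTop f g ε hε (hg ε hε) hfm hson₁
  exact ⟨sonine_mul_tendsto f g ε hε (hg ε hε) hfm hgm hson₁ hftop hgtop,
    sonine_mul_tendsto g f ε hε (hf ε hε) hgm hfm hson₂ hgtop hftop⟩
end

section
/- If g ∈ L¹_loc([0,∞)) and F ∈ L¹_loc([0,∞)) satisfy g ∗ F = 0 a.e. on (0,∞), and g has an associated Sonine function f (i.e., g ∗ f = 1), then F = 0 almost everywhere. Consequently the solution f of the Sonine equation for a given g is unique in L¹_loc. -/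
open MeasureTheory Real Set Filter

open scoped Convolution Topology

namespace SonineAux

/-- extension by zero to `(0, ∞)` -/
noncomputable def E (g : ℝ → ℝ) : ℝ → ℝ := Set.indicator (Set.Ioi 0) g

/-- truncation to `(0, T]` -/
noncomputable def Tr (T : ℝ) (g : ℝ → ℝ) : ℝ → ℝ := Set.indicator (Set.Ioc 0 T) g

lemma E_of_pos {g : ℝ → ℝ} {x : ℝ} (hx : 0 < x) : E g x = g x :=
  Set.indicator_of_mem hx g

lemma E_of_nonpos {g : ℝ → ℝ} {x : ℝ} (hx : x ≤ 0) : E g x = 0 :=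
  Set.indicator_of_notMem (by simpa using hx) g

lemma Tr_eq_E (T : ℝ) (g : ℝ → ℝ) : Tr T g = E (Tr T g) := by
  funext x
  by_cases hx : 0 < x
  · rw [E_of_pos hx]
  · rw [E_of_nonpos (not_lt.1 hx)]
    exact Set.indicator_of_notMem (fun h => hx h.1) g

lemma norm_E (g : ℝ → ℝ) : (fun x => ‖E g x‖) = E (fun x => ‖g x‖) :=
  funext fun x => norm_indicator_eq_indicator_norm g x

lemma Ioi_eq_iUnion : Set.Ioi (0:ℝ) = ⋃ n : ℕ, Set.Ioc 0 ((n:ℝ)+1) := by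
  ext x
  simp only [Set.mem_Ioi, Set.mem_iUnion, Set.mem_Ioc]
  constructor
  · intro hx
    obtain ⟨n, hn⟩ := exists_nat_ge x
    exact ⟨n, hx, by linarith⟩
  · rintro ⟨n, hn, -⟩; exact hn

lemma E_meas {g : ℝ → ℝ} (hg : ∀ T > 0, IntegrableOn g (Set.Ioc 0 T)) :
    AEStronglyMeasurable (E g) volume := by
  rw [E, aestronglyMeasurable_indicator_iff measurableSet_Ioi, Ioi_eq_iUnion,
    aestronglyMeasurable_iUnion_iff]
  intro n
  exact (hg ((n:ℝ)+1) (by positivity)).aestronglyMeasurable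

lemma Tr_int {g : ℝ → ℝ} (hg : ∀ T > 0, IntegrableOn g (Set.Ioc 0 T)) {T : ℝ} (hT : 0 < T) :
    Integrable (Tr T g) volume := by
  rw [Tr, integrable_indicator_iff measurableSet_Ioc]
  exact hg T hT

/-- key pointwise identity for truncation -/
lemma eq_Tr {g F : ℝ → ℝ} {T t : ℝ} (ht : t ≤ T) (s : ℝ) :
    E g s * E F (t - s) = Tr T g s * Tr T F (t - s) := by
  simp only [Tr]
  by_cases hs : 0 < s
  · by_cases hts : 0 < t - s
    · rw [E_of_pos hs, E_of_pos hts,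
        Set.indicator_of_mem (Set.mem_Ioc.mpr ⟨hs, by linarith⟩),
        Set.indicator_of_mem (Set.mem_Ioc.mpr ⟨hts, by linarith⟩)]
    · rw [E_of_nonpos (not_lt.1 hts), mul_zero,
        Set.indicator_of_notMem (fun h => hts (Set.mem_Ioc.mp h).1), mul_zero]
  · rw [E_of_nonpos (not_lt.1 hs), zero_mul,
      Set.indicator_of_notMem (fun h => hs (Set.mem_Ioc.mp h).1), zero_mul]


noncomputable abbrev Lm : ℝ →L[ℝ] ℝ →L[ℝ] ℝ := ContinuousLinearMap.mul ℝ ℝ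

lemma convE_apply (g F : ℝ → ℝ) (t : ℝ) :
    (E g ⋆[Lm] E F) t = ∫ s, E g s * E F (t - s) := by
  simp only [convolution_def, ContinuousLinearMap.mul_apply']

lemma convE_nonpos (g F : ℝ → ℝ) {t : ℝ} (ht : t ≤ 0) : (E g ⋆[Lm] E F) t = 0 := by
  rw [convE_apply]
  have h : ∀ s : ℝ, E g s * E F (t - s) = 0 := by
    intro s
    by_cases hs : 0 < s
    · rw [E_of_nonpos (by linarith : t - s ≤ 0), mul_zero]
    · rw [E_of_nonpos (not_lt.1 hs), zero_mul]
  simp only [h, integral_zero]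

lemma convE_pos (g F : ℝ → ℝ) {t : ℝ} (ht : 0 < t) :
    (E g ⋆[Lm] E F) t = ∫ s in (0:ℝ)..t, g s * F (t - s) := by
  rw [convE_apply, intervalIntegral.integral_of_le ht.le, integral_Ioc_eq_integral_Ioo]
  rw [← setIntegral_eq_integral_of_forall_compl_eq_zero
    (s := Set.Ioo 0 t) (f := fun s => E g s * E F (t - s))]
  · refine setIntegral_congr_fun measurableSet_Ioo fun s hs => ?_
    rw [E_of_pos hs.1, E_of_pos (by simp [hs.2] : (0:ℝ) < t - s)]
  · intro s hs
    rcases not_and_or.mp hs with h | h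
    · rw [E_of_nonpos (not_lt.1 h), zero_mul]
    · rw [E_of_nonpos (by simp at h; linarith : t - s ≤ 0), mul_zero]

lemma convE_eqT (g F : ℝ → ℝ) {T t : ℝ} (ht : t ≤ T) :
    (E g ⋆[Lm] E F) t = (E (Tr T g) ⋆[Lm] E (Tr T F)) t := by
  rw [convE_apply, convE_apply]
  refine integral_congr_ae (Filter.Eventually.of_forall fun s => ?_)
  rw [← Tr_eq_E, ← Tr_eq_E]
  exact eq_Tr ht s

lemma aeCEA {g F : ℝ → ℝ} (hg : ∀ T > 0, IntegrableOn g (Set.Ioc 0 T))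
    (hF : ∀ T > 0, IntegrableOn F (Set.Ioc 0 T)) :
    ∀ᵐ t : ℝ, ConvolutionExistsAt (E g) (E F) t Lm volume := by
  have h : ∀ n : ℕ, ∀ᵐ x : ℝ,
      ConvolutionExistsAt (Tr ((n:ℝ)+1) g) (Tr ((n:ℝ)+1) F) x Lm volume :=
    fun n => Integrable.ae_convolution_exists (L := Lm) (Tr_int hg (by positivity))
      (Tr_int hF (by positivity))
  filter_upwards [ae_all_iff.2 h] with t ht
  obtain ⟨n, hn⟩ := exists_nat_ge t
  have e : (fun s => Lm (E g s) (E F (t - s)))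
      = fun s => Lm (Tr ((n:ℝ)+1) g s) (Tr ((n:ℝ)+1) F (t - s)) := by
    funext s
    simp only [ContinuousLinearMap.mul_apply']
    exact eq_Tr (by linarith) s
  show Integrable _ volume
  rw [e]
  exact ht n


lemma aeCEA3 {g F f : ℝ → ℝ} (hg : ∀ T > 0, IntegrableOn g (Set.Ioc 0 T))
    (hF : ∀ T > 0, IntegrableOn F (Set.Ioc 0 T))
    (hf : ∀ T > 0, IntegrableOn f (Set.Ioc 0 T)) :
    ∀ᵐ x : ℝ, ConvolutionExistsAt (E f) (E g ⋆[Lm] E F) x Lm volume := by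
  have h : ∀ n : ℕ, ∀ᵐ x : ℝ,
      ConvolutionExistsAt (Tr ((n:ℝ)+1) f)
        (E (Tr ((n:ℝ)+1) g) ⋆[Lm] E (Tr ((n:ℝ)+1) F)) x Lm volume := by
    intro n
    have hH : Integrable (E (Tr ((n:ℝ)+1) g) ⋆[Lm] E (Tr ((n:ℝ)+1) F)) volume := by
      rw [← Tr_eq_E, ← Tr_eq_E]
      exact Integrable.integrable_convolution Lm (Tr_int hg (by positivity))
        (Tr_int hF (by positivity))
    exact Integrable.ae_convolution_exists (L := Lm) (Tr_int hf (by positivity)) hH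
  filter_upwards [ae_all_iff.2 h] with x hx
  obtain ⟨n, hn⟩ := exists_nat_ge x
  have ht : x ≤ (n:ℝ)+1 := by linarith
  have e : (fun s => Lm (E f s) ((E g ⋆[Lm] E F) (x - s)))
      = fun s => Lm (Tr ((n:ℝ)+1) f s)
          ((E (Tr ((n:ℝ)+1) g) ⋆[Lm] E (Tr ((n:ℝ)+1) F)) (x - s)) := by
    funext s
    simp only [ContinuousLinearMap.mul_apply']
    by_cases hs : 0 < s
    · by_cases hxs : 0 < x - s
      · rw [← convE_eqT g F (by linarith : x - s ≤ (n:ℝ)+1), E_of_pos hs, Tr,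
          Set.indicator_of_mem (Set.mem_Ioc.mpr ⟨hs, by linarith⟩)]
      · rw [convE_nonpos _ _ (not_lt.1 hxs), convE_nonpos _ _ (not_lt.1 hxs),
          mul_zero, mul_zero]
    · rw [E_of_nonpos (not_lt.1 hs), Tr,
        Set.indicator_of_notMem (fun h => hs (Set.mem_Ioc.mp h).1), zero_mul, zero_mul]
  show Integrable _ volume
  rw [e]
  exact hx n


lemma key (g F f : ℝ → ℝ)
    (hg : ∀ T > 0, IntegrableOn g (Set.Ioc 0 T))
    (hF : ∀ T > 0, IntegrableOn F (Set.Ioc 0 T))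
    (hf : ∀ T > 0, IntegrableOn f (Set.Ioc 0 T))
    (hson : ∀ t > 0, ∫ s in (0:ℝ)..t, g s * f (t - s) = 1)
    (hconv : ∀ᵐ t ∂(volume.restrict (Set.Ioi (0:ℝ))),
      ∫ s in (0:ℝ)..t, g s * F (t - s) = 0) :
    ∀ᵐ t ∂(volume.restrict (Set.Ioi (0:ℝ))), F t = 0 := by
  -- step 1 : the convolution of the extensions vanishes a.e.
  have hGK0 : ∀ᵐ t : ℝ, (E g ⋆[Lm] E F) t = 0 := by
    filter_upwards [ae_imp_of_ae_restrict hconv] with t ht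
    by_cases hpos : 0 < t
    · rw [convE_pos g F hpos]; exact ht hpos
    · exact convE_nonpos g F (not_lt.1 hpos)
  -- step 2 : left side of associativity vanishes everywhere
  have hLHS : ∀ x₀ : ℝ, (E f ⋆[Lm] (E g ⋆[Lm] E F)) x₀ = 0 := by
    intro x₀
    rw [convolution_def]
    have h2 : ∀ᵐ s : ℝ, Lm (E f s) ((E g ⋆[Lm] E F) (x₀ - s)) = 0 := by
      filter_upwards [(quasiMeasurePreserving_sub_left_of_right_invariant
        (volume : Measure ℝ) x₀).ae hGK0] with s hs
      rw [ContinuousLinearMap.mul_apply', hs, mul_zero]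
    rw [integral_congr_ae h2, integral_zero]
  -- step 3 : `E f ⋆ E g` is the indicator of `(0,∞)`
  have hsub : ∀ t : ℝ, 0 < t → (E f ⋆[Lm] E g) t = 1 := by
    intro t ht
    rw [convE_pos f g ht]
    have h1 := intervalIntegral.integral_comp_sub_left (a := (0:ℝ)) (b := t)
      (fun u => g u * f (t - u)) t
    simp only [sub_sub_cancel, sub_zero, sub_self] at h1
    calc ∫ s in (0:ℝ)..t, f s * g (t - s)
        = ∫ s in (0:ℝ)..t, g (t - s) * f s := by simp_rw [mul_comm]
      _ = ∫ s in (0:ℝ)..t, g s * f (t - s) := h1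
      _ = 1 := hson t ht
  have hPhiG : (E f ⋆[Lm] E g) = Set.indicator (Set.Ioi 0) (fun _ => (1:ℝ)) := by
    funext t
    by_cases ht : 0 < t
    · rw [hsub t ht, Set.indicator_of_mem (show t ∈ Set.Ioi 0 from ht)]
    · rw [convE_nonpos f g (not_lt.1 ht),
        Set.indicator_of_notMem (by simpa using not_lt.1 ht)]
  -- step 4 : right side of associativity is the primitive of F
  have hRHS : ∀ x₀ : ℝ, ((E f ⋆[Lm] E g) ⋆[Lm] E F) x₀ = ∫ t in Set.Ioo 0 x₀, F t := by
    intro x₀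
    rw [convolution_def,
      ← integral_sub_left_eq_self (fun t => Lm ((E f ⋆[Lm] E g) t) (E F (x₀ - t))) volume x₀]
    have e : ∀ t : ℝ, Lm ((E f ⋆[Lm] E g) (x₀ - t)) (E F (x₀ - (x₀ - t)))
        = Set.indicator (Set.Ioo 0 x₀) F t := by
      intro t
      rw [sub_sub_cancel, ContinuousLinearMap.mul_apply', hPhiG]
      by_cases h1 : 0 < t
      · by_cases h2 : t < x₀
        · rw [Set.indicator_of_mem (by simpa using sub_pos.mpr h2 : x₀ - t ∈ Set.Ioi (0:ℝ)),
            one_mul, E_of_pos h1, Set.indicator_of_mem (Set.mem_Ioo.mpr ⟨h1, h2⟩)]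
        · rw [Set.indicator_of_notMem (by simp; linarith : x₀ - t ∉ Set.Ioi (0:ℝ)),
            zero_mul, Set.indicator_of_notMem (fun hm => h2 hm.2)]
      · rw [E_of_nonpos (not_lt.1 h1), mul_zero,
          Set.indicator_of_notMem (fun hm => h1 hm.1)]
    rw [integral_congr_ae (Filter.Eventually.of_forall e),
      integral_indicator measurableSet_Ioo]
  -- step 5 : associativity, a.e.
  have hzero : ∀ᵐ x₀ : ℝ, ∫ t in Set.Ioo 0 x₀, F t = 0 := by
    have hgk : ∀ᵐ x : ℝ, ConvolutionExistsAt (fun y => ‖E g y‖) (fun y => ‖E F y‖) x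
        (ContinuousLinearMap.mul ℝ ℝ) volume := by
      rw [norm_E, norm_E]
      exact aeCEA (fun T hT => (hg T hT).norm) (fun T hT => (hF T hT).norm)
    have hfgk : ∀ᵐ x : ℝ, ConvolutionExistsAt (fun y => ‖E f y‖)
        ((fun y => ‖E g y‖) ⋆[ContinuousLinearMap.mul ℝ ℝ, volume] fun y => ‖E F y‖) x
        (ContinuousLinearMap.mul ℝ ℝ) volume := by
      rw [norm_E, norm_E, norm_E]
      exact aeCEA3 (fun T hT => (hg T hT).norm) (fun T hT => (hF T hT).norm)
        (fun T hT => (hf T hT).norm)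
    filter_upwards [hfgk] with x₀ hx₀
    calc ∫ t in Set.Ioo 0 x₀, F t
        = ((E f ⋆[Lm] E g) ⋆[Lm] E F) x₀ := (hRHS x₀).symm
      _ = (E f ⋆[Lm] (E g ⋆[Lm] E F)) x₀ :=
          convolution_assoc Lm Lm Lm Lm (fun a b c => mul_assoc a b c)
            (E_meas hf) (E_meas hg) (E_meas hF)
            (aeCEA hf hg) hgk hx₀
      _ = 0 := hLHS x₀

  -- step 6 : integrability facts for the extension K := E F
  have hIcc : ∀ a b : ℝ, IntegrableOn (E F) (Set.Icc a b) volume := by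
    intro a b
    have hMpos : (0:ℝ) < max b 1 := lt_max_of_lt_right one_pos
    have heq : Set.EqOn (Tr (max b 1) F) (E F) (Set.Icc a b) := by
      intro x hx
      by_cases hxp : 0 < x
      · rw [E_of_pos hxp, Tr,
          Set.indicator_of_mem (Set.mem_Ioc.mpr ⟨hxp, le_max_of_le_left hx.2⟩)]
      · rw [E_of_nonpos (not_lt.1 hxp), Tr,
          Set.indicator_of_notMem (fun h => hxp (Set.mem_Ioc.mp h).1)]
    exact IntegrableOn.congr_fun ((Tr_int hF hMpos).integrableOn) heq measurableSet_Icc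
  have hII : ∀ a b : ℝ, IntervalIntegrable (E F) volume a b := fun a b =>
    IntegrableOn.intervalIntegrable (hIcc (a ⊓ b) (a ⊔ b))
  -- step 7 : the primitive of `E F` vanishes identically
  have hJc : Continuous (fun x : ℝ => ∫ s in (0:ℝ)..x, E F s) :=
    intervalIntegral.continuous_primitive hII 0
  have hJneg : ∀ x : ℝ, x ≤ 0 → ∫ s in (0:ℝ)..x, E F s = 0 := by
    intro x hx
    rw [intervalIntegral.integral_symm, intervalIntegral.integral_of_le hx]
    rw [setIntegral_eq_zero_of_forall_eq_zero fun t ht => E_of_nonpos ht.2]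
    exact neg_zero
  have hJae : ∀ᵐ x : ℝ, x ∈ Set.Ioi (0:ℝ) → ∫ s in (0:ℝ)..x, E F s = 0 := by
    filter_upwards [hzero] with x hx hxp
    rw [intervalIntegral.integral_of_le (le_of_lt hxp), integral_Ioc_eq_integral_Ioo,
      setIntegral_congr_fun measurableSet_Ioo (fun t ht => E_of_pos ht.1)]
    exact hx
  have hJ0 : ∀ x : ℝ, ∫ s in (0:ℝ)..x, E F s = 0 := by
    have hU : {x : ℝ | x ∈ Set.Ioi 0 ∧ ∫ s in (0:ℝ)..x, E F s ≠ 0} = ∅ := by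
      have hop : IsOpen {x : ℝ | x ∈ Set.Ioi 0 ∧ ∫ s in (0:ℝ)..x, E F s ≠ 0} :=
        isOpen_Ioi.inter (isOpen_compl_singleton.preimage hJc)
      refine hop.eq_empty_of_measure_zero (μ := (volume : Measure ℝ)) ?_
      have hset : {x : ℝ | x ∈ Set.Ioi 0 ∧ ∫ s in (0:ℝ)..x, E F s ≠ 0}
          = {x : ℝ | ¬ (x ∈ Set.Ioi 0 → ∫ s in (0:ℝ)..x, E F s = 0)} := by
        ext x; simp only [Set.mem_setOf_eq]; tauto
      rw [hset]
      exact ae_iff.1 hJae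
    intro x
    rcases le_or_gt x 0 with hx | hx
    · exact hJneg x hx
    · by_contra hne
      have : x ∈ {x : ℝ | x ∈ Set.Ioi 0 ∧ ∫ s in (0:ℝ)..x, E F s ≠ 0} := ⟨hx, hne⟩
      rw [hU] at this
      exact Set.notMem_empty x this
  have hbox : ∀ a b : ℝ, ∫ t in Set.Ioc a b, E F t = 0 := by
    intro a b
    rcases le_or_gt a b with hab | hab
    · have h3 := intervalIntegral.integral_add_adjacent_intervals (hII 0 a) (hII a b)
      have ha := hJ0 a
      have hb := hJ0 b
      rw [← intervalIntegral.integral_of_le hab]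
      linarith [h3]
    · rw [Set.Ioc_eq_empty (not_lt.mpr (le_of_lt hab))]
      simp
  -- step 8 : Lebesgue differentiation
  have hKloc : LocallyIntegrable (E F) volume := fun x =>
    ⟨Set.Icc (x-1) (x+1), Icc_mem_nhds (by linarith) (by linarith), hIcc _ _⟩
  have hK0 : ∀ᵐ x : ℝ, E F x = 0 := by
    filter_upwards [(Besicovitch.vitaliFamily (volume : Measure ℝ)).ae_tendsto_average hKloc]
      with x hx
    have h1 := hx.comp (Besicovitch.tendsto_filterAt (volume : Measure ℝ) x)
    have h2 : (fun r : ℝ => ⨍ y in Metric.closedBall x r, E F y) =ᶠ[𝓝[>] (0:ℝ)]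
        (fun _ => (0:ℝ)) := by
      filter_upwards [self_mem_nhdsWithin] with r hr
      have h4 : ∫ y in Metric.closedBall x r, E F y = 0 := by
        rw [Real.closedBall_eq_Icc, integral_Icc_eq_integral_Ioc]
        exact hbox _ _
      rw [setAverage_eq, h4, smul_zero]
    exact tendsto_nhds_unique (h1.congr' h2) tendsto_const_nhds
  filter_upwards [ae_restrict_of_ae hK0, ae_restrict_mem measurableSet_Ioi] with x hx hmem
  have hEx : E F x = F x := E_of_pos (g := F) (show (0:ℝ) < x from hmem)
  rw [← hEx]
  exact hx

end SonineAux

/-- If g∗F = 0 a.e. on (0,∞) and g has an associated Sonine function f, then F = 0 a.e.;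
consequently the associated Sonine function is unique in L¹_loc. -/
theorem sonine_unique (g F f : ℝ → ℝ)
    (hg : ∀ T > 0, IntegrableOn g (Set.Ioc 0 T))
    (hF : ∀ T > 0, IntegrableOn F (Set.Ioc 0 T))
    (hf : ∀ T > 0, IntegrableOn f (Set.Ioc 0 T))
    (hson : ∀ t > 0, ∫ s in (0:ℝ)..t, g s * f (t - s) = 1)
    (hconv : ∀ᵐ t ∂(volume.restrict (Set.Ioi (0:ℝ))),
      ∫ s in (0:ℝ)..t, g s * F (t - s) = 0) :
    (∀ᵐ t ∂(volume.restrict (Set.Ioi (0:ℝ))), F t = 0) ∧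
      ∀ f' : ℝ → ℝ, (∀ T > 0, IntegrableOn f' (Set.Ioc 0 T)) →
        (∀ t > 0, ∫ s in (0:ℝ)..t, g s * f' (t - s) = 1) →
        (∀ᵐ t ∂(volume.restrict (Set.Ioi (0:ℝ))), f' t = f t) := by
  constructor
  · exact SonineAux.key g F f hg hF hf hson hconv
  · intro f' hf' hson'
    have hint : ∀ (φ : ℝ → ℝ), (∀ t > 0, ∫ s in (0:ℝ)..t, g s * φ (t - s) = 1) →
        ∀ t : ℝ, 0 < t → IntervalIntegrable (fun s => g s * φ (t - s)) volume 0 t := by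
      intro φ hφ t ht
      by_contra h
      have h0 := intervalIntegral.integral_undef h
      rw [hφ t ht] at h0
      exact one_ne_zero h0
    have hconv' : ∀ᵐ t ∂(volume.restrict (Set.Ioi (0:ℝ))),
        ∫ s in (0:ℝ)..t, g s * ((fun x => f' x - f x) (t - s)) = 0 := by
      filter_upwards [ae_restrict_mem measurableSet_Ioi] with t ht
      have h1 := hint f' hson' t ht
      have h2 := hint f hson t ht
      calc ∫ s in (0:ℝ)..t, g s * (f' (t-s) - f (t-s))
          = ∫ s in (0:ℝ)..t, (g s * f' (t-s) - g s * f (t-s)) := by simp_rw [mul_sub]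
        _ = (∫ s in (0:ℝ)..t, g s * f' (t-s)) - ∫ s in (0:ℝ)..t, g s * f (t-s) :=
            intervalIntegral.integral_sub h1 h2
        _ = 0 := by rw [hson' t ht, hson t ht, sub_self]
    have hkey := SonineAux.key g (fun x => f' x - f x) f hg
      (fun T hT => ((hf' T hT).sub (hf T hT))) hf hson hconv'
    filter_upwards [hkey] with t ht
    have : f' t - f t = 0 := ht
    linarith
end

section
/- If g, f ∈ L¹_loc satisfy the Sonine equation g∗f = 1, then for every C¹ function φ on [0,∞), D(g ∗ (f ∗ φ))(t) = φ(t) for all t > 0, i.e., the generalized fractional derivative D_g is a left inverse of the generalized fractional integral I_f. -/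
open MeasureTheory Real Set Filter
open Topology

/-- If g∗f = 1 then D_g is a left inverse of I_f: D(g∗(f∗φ))(t) = φ(t) for C¹ φ. -/
theorem Dg_leftInverse_If (g f φ : ℝ → ℝ)
    (hg : ∀ T > 0, IntegrableOn g (Set.Ioc 0 T))
    (hf : ∀ T > 0, IntegrableOn f (Set.Ioc 0 T))
    (hson : ∀ t > 0, ∫ s in (0:ℝ)..t, g s * f (t - s) = 1)
    (hφ : ContDiffOn ℝ 1 φ (Set.Ici 0)) :
    ∀ t > 0,
      HasDerivAt
        (fun τ => ∫ s in (0:ℝ)..τ, g s * (∫ u in (0:ℝ)..(τ - s), f u * φ (τ - s - u)))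
        (φ t) t := by
  have hφc : ContinuousOn φ (Set.Ici 0) := hφ.continuousOn
  set ψ : ℝ → ℝ := fun r => φ (max r 0) with hψdef
  have hψcont : Continuous ψ := by
    have hmax : Continuous fun r : ℝ => max r 0 := continuous_id.max continuous_const
    exact hφc.comp_continuous hmax (fun x => Set.mem_Ici.mpr (le_max_right _ _))
  have hψ_eq : ∀ r : ℝ, 0 ≤ r → ψ r = φ r := by
    intro r hr; simp [hψdef, max_eq_left hr]
  have key : ∀ τ > (0:ℝ),
      (∫ s in (0:ℝ)..τ, g s * (∫ u in (0:ℝ)..(τ - s), f u * φ (τ - s - u)))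
        = ∫ u in (0:ℝ)..τ, φ u := by
    intro τ hτ
    set G : ℝ → ℝ := (Set.Ioc (0:ℝ) τ).indicator g with hGdef
    set F : ℝ → ℝ := (Set.Ioc (0:ℝ) τ).indicator f with hFdef
    set W : ℝ → ℝ := (Set.Ioc (0:ℝ) τ).indicator (fun v => ψ (τ - v)) with hWdef
    have hGint : Integrable G := by
      rw [hGdef, integrable_indicator_iff measurableSet_Ioc]; exact hg τ hτ
    have hFint : Integrable F := by
      rw [hFdef, integrable_indicator_iff measurableSet_Ioc]; exact hf τ hτ
    have hW0 : ∀ v, v ∉ Set.Ioc (0:ℝ) τ → W v = 0 := by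
      intro v hv; simp [hWdef, Set.indicator_of_notMem hv]
    have hG0 : ∀ s, s ∉ Set.Ioc (0:ℝ) τ → G s = 0 := by
      intro s hs; simp [hGdef, Set.indicator_of_notMem hs]
    have hF0 : ∀ u, u ∉ Set.Ioc (0:ℝ) τ → F u = 0 := by
      intro u hu; simp [hFdef, Set.indicator_of_notMem hu]
    -- integrability of the full integrand on ℝ × ℝ
    have hbase : Integrable (fun p : ℝ × ℝ => G p.2 * F (p.1 - p.2))
        (volume.prod volume) := by
      have := hGint.convolution_integrand (ContinuousLinearMap.mul ℝ ℝ) hFint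
      simpa using this
    obtain ⟨C, hC⟩ := (isCompact_Icc (a := (0:ℝ)) (b := τ)).exists_bound_of_continuousOn
      hψcont.continuousOn
    have hWbdd : ∀ v, ‖W v‖ ≤ max C 0 := by
      intro v
      by_cases hv : v ∈ Set.Ioc (0:ℝ) τ
      · rw [hWdef, Set.indicator_of_mem hv]
        exact le_trans (hC _ ⟨by linarith [hv.2], by linarith [hv.1]⟩) (le_max_left _ _)
      · simp [hW0 v hv]
    have hWmeas : AEStronglyMeasurable (fun p : ℝ × ℝ => W p.1) (volume.prod volume) := by
      have hWm : Measurable W :=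
        ((hψcont.comp (continuous_const.sub continuous_id)).measurable).indicator
          measurableSet_Ioc
      exact (hWm.comp measurable_fst).aestronglyMeasurable
    have hK : Integrable (fun p : ℝ × ℝ => G p.2 * F (p.1 - p.2) * W p.1)
        (volume.prod volume) := by
      have := hbase.bdd_mul hWmeas (Filter.Eventually.of_forall fun p => hWbdd p.1)
      simpa [mul_comm] using this
    have hswap :
        (∫ v : ℝ, ∫ s : ℝ, G s * F (v - s) * W v)
          = ∫ s : ℝ, ∫ v : ℝ, G s * F (v - s) * W v :=
      integral_integral_swap hK
    -- inner substitution
    have hsub : ∀ s : ℝ,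
        (∫ u in (0:ℝ)..(τ - s), f u * φ (τ - s - u))
          = ∫ v in s..τ, f (v - s) * φ (τ - v) := by
      intro s
      have h := intervalIntegral.integral_comp_add_right
        (a := (0:ℝ)) (b := τ - s) (fun v => f (v - s) * φ (τ - v)) s
      rw [show (0:ℝ) + s = s by ring, show τ - s + s = τ by ring] at h
      rw [← h]
      refine intervalIntegral.integral_congr fun u _ => ?_
      have h1 : u + s - s = u := by ring
      have h2 : τ - (u + s) = τ - s - u := by ring
      rw [h1, h2]
    -- RHS of swap equals the goal's LHS
    have hRHS : (∫ s : ℝ, ∫ v : ℝ, G s * F (v - s) * W v)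
        = ∫ s in (0:ℝ)..τ, g s * (∫ u in (0:ℝ)..(τ - s), f u * φ (τ - s - u)) := by
      have hBs : ∀ s : ℝ, (∫ v : ℝ, G s * F (v - s) * W v)
          = (Set.Ioc (0:ℝ) τ).indicator
              (fun s => g s * ∫ v in s..τ, f (v - s) * φ (τ - v)) s := by
        intro s
        by_cases hs : s ∈ Set.Ioc (0:ℝ) τ
        · rw [Set.indicator_of_mem hs]
          have hfs : (fun v => G s * F (v - s) * W v)
              = (Set.Ioc s τ).indicator (fun v => g s * (f (v - s) * φ (τ - v))) := by
            funext v
            by_cases hv : v ∈ Set.Ioc s τ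
            · rw [Set.indicator_of_mem hv]
              have h1 : v - s ∈ Set.Ioc (0:ℝ) τ :=
                ⟨by linarith [hv.1], by linarith [hv.2, hs.1]⟩
              have h2 : v ∈ Set.Ioc (0:ℝ) τ := ⟨lt_trans hs.1 hv.1, hv.2⟩
              rw [hGdef, hFdef, hWdef, Set.indicator_of_mem hs,
                Set.indicator_of_mem h1, Set.indicator_of_mem h2,
                hψ_eq (τ - v) (by linarith [hv.2])]
              ring
            · rw [Set.indicator_of_notMem hv]
              rcases not_and_or.1 hv with h | h
              · have : v - s ∉ Set.Ioc (0:ℝ) τ := by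
                  intro hmem; exact h (by linarith [hmem.1])
                simp [hF0 _ this]
              · have : v ∉ Set.Ioc (0:ℝ) τ := by
                  intro hmem; exact h hmem.2
                simp [hW0 _ this]
          rw [hfs, integral_indicator measurableSet_Ioc,
            intervalIntegral.integral_of_le hs.2, ← integral_const_mul]
        · rw [Set.indicator_of_notMem hs]
          have : ∀ v, G s * F (v - s) * W v = 0 := fun v => by simp [hG0 s hs]
          simp [this]
      calc (∫ s : ℝ, ∫ v : ℝ, G s * F (v - s) * W v)
          = ∫ s : ℝ, (Set.Ioc (0:ℝ) τ).indicator
              (fun s => g s * ∫ v in s..τ, f (v - s) * φ (τ - v)) s := by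
            exact integral_congr_ae (Filter.Eventually.of_forall hBs)
        _ = ∫ s in Set.Ioc (0:ℝ) τ, g s * ∫ v in s..τ, f (v - s) * φ (τ - v) :=
            integral_indicator measurableSet_Ioc
        _ = ∫ s in (0:ℝ)..τ, g s * ∫ v in s..τ, f (v - s) * φ (τ - v) :=
            (intervalIntegral.integral_of_le hτ.le).symm
        _ = ∫ s in (0:ℝ)..τ, g s * (∫ u in (0:ℝ)..(τ - s), f u * φ (τ - s - u)) := by
            refine intervalIntegral.integral_congr fun s _ => ?_
            rw [hsub s]
    -- LHS of swap equals ∫ φ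
    have hLHS : (∫ v : ℝ, ∫ s : ℝ, G s * F (v - s) * W v)
        = ∫ u in (0:ℝ)..τ, φ u := by
      have hAv : ∀ v : ℝ, (∫ s : ℝ, G s * F (v - s) * W v)
          = (Set.Ioc (0:ℝ) τ).indicator (fun v => φ (τ - v)) v := by
        intro v
        by_cases hv : v ∈ Set.Ioc (0:ℝ) τ
        · rw [Set.indicator_of_mem hv]
          have hfs : (fun s => G s * F (v - s) * W v)
              = (Set.Ioo (0:ℝ) v).indicator (fun s => g s * f (v - s) * φ (τ - v)) := by
            funext s
            by_cases hs : s ∈ Set.Ioo (0:ℝ) v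
            · rw [Set.indicator_of_mem hs]
              have h1 : s ∈ Set.Ioc (0:ℝ) τ := ⟨hs.1, le_trans hs.2.le hv.2⟩
              have h2 : v - s ∈ Set.Ioc (0:ℝ) τ :=
                ⟨by linarith [hs.2], by linarith [hv.2, hs.1]⟩
              rw [hGdef, hFdef, hWdef, Set.indicator_of_mem h1,
                Set.indicator_of_mem h2, Set.indicator_of_mem hv,
                hψ_eq (τ - v) (by linarith [hv.2])]
            · rw [Set.indicator_of_notMem hs]
              rcases not_and_or.1 hs with h | h
              · have : s ∉ Set.Ioc (0:ℝ) τ := by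
                  intro hmem; exact h hmem.1
                simp [hG0 _ this]
              · have : v - s ∉ Set.Ioc (0:ℝ) τ := by
                  intro hmem; exact h (by linarith [hmem.1])
                simp [hF0 _ this]
          rw [hfs, integral_indicator measurableSet_Ioo,
            ← integral_Ioc_eq_integral_Ioo, integral_mul_const,
            ← intervalIntegral.integral_of_le hv.1.le, hson v hv.1, one_mul]
        · rw [Set.indicator_of_notMem hv]
          have : ∀ s, G s * F (v - s) * W v = 0 := fun s => by simp [hW0 v hv]
          simp [this]
      calc (∫ v : ℝ, ∫ s : ℝ, G s * F (v - s) * W v)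
          = ∫ v : ℝ, (Set.Ioc (0:ℝ) τ).indicator (fun v => φ (τ - v)) v :=
            integral_congr_ae (Filter.Eventually.of_forall hAv)
        _ = ∫ v in Set.Ioc (0:ℝ) τ, φ (τ - v) := integral_indicator measurableSet_Ioc
        _ = ∫ v in (0:ℝ)..τ, φ (τ - v) := (intervalIntegral.integral_of_le hτ.le).symm
        _ = ∫ u in (0:ℝ)..τ, φ u := by
            rw [intervalIntegral.integral_comp_sub_left (a := (0:ℝ)) (b := τ) φ τ]
            norm_num
    rw [← hRHS, ← hswap, hLHS]
  -- now the derivative part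
  intro t ht
  have hIcc : Set.uIcc (0:ℝ) t ⊆ Set.Ici (0:ℝ) := by
    rw [Set.uIcc_of_le ht.le]
    exact fun x hx => hx.1
  have hInt : IntervalIntegrable φ volume 0 t :=
    (hφc.mono hIcc).intervalIntegrable
  have hcontIoi : ContinuousOn φ (Set.Ioi (0:ℝ)) :=
    hφc.mono Set.Ioi_subset_Ici_self
  have hmeas : StronglyMeasurableAtFilter φ (𝓝 t) :=
    hcontIoi.stronglyMeasurableAtFilter isOpen_Ioi t ht
  have hct : ContinuousAt φ t := by
    have : Set.Ici (0:ℝ) ∈ 𝓝 t := Ici_mem_nhds ht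
    exact hφc.continuousAt this
  have hD : HasDerivAt (fun τ => ∫ u in (0:ℝ)..τ, φ u) (φ t) t :=
    intervalIntegral.integral_hasDerivAt_right hInt hmeas hct
  refine hD.congr_of_eventuallyEq ?_
  filter_upwards [Ioi_mem_nhds ht] with τ hτ using key τ hτ
end

section
/- For 0 < α ≤ 1, g(t) = E_α(−t^α) satisfies g(t) + ∫₀ᵗ g(s)·(t−s)^{α−1}/Γ(α) ds = 1 for all t > 0, where E_α is the Mittag-Leffler function. -/
open MeasureTheory Real Set Filter

/-- Real Beta integral. -/
lemma real_beta {u v : ℝ} (hu : 0 < u) (hv : 0 < v) :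
    ∫ x in (0:ℝ)..1, x ^ (u - 1) * (1 - x) ^ (v - 1)
      = Real.Gamma u * Real.Gamma v / Real.Gamma (u + v) := by
  have h1 : ((∫ x in (0:ℝ)..1, x ^ (u - 1) * (1 - x) ^ (v - 1) : ℝ) : ℂ)
      = Complex.betaIntegral u v := by
    rw [← intervalIntegral.integral_ofReal]
    unfold Complex.betaIntegral
    refine intervalIntegral.integral_congr fun x hx => ?_
    rw [uIcc_of_le (by norm_num : (0:ℝ) ≤ 1)] at hx
    rw [Complex.ofReal_mul, Complex.ofReal_cpow hx.1, Complex.ofReal_cpow (by linarith [hx.2])]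
    push_cast
    ring_nf
  have h2 := Complex.Gamma_mul_Gamma_eq_betaIntegral
    (s := (u:ℂ)) (t := (v:ℂ)) (by simpa using hu) (by simpa using hv)
  rw [← h1] at h2
  have h3 : ((Real.Gamma u * Real.Gamma v : ℝ) : ℂ)
      = ((Real.Gamma (u + v) : ℝ) : ℂ) * ((∫ x in (0:ℝ)..1, x ^ (u-1) * (1-x) ^ (v-1) : ℝ) : ℂ) := by
    rw [Complex.ofReal_mul]
    rw [Complex.Gamma_ofReal, Complex.Gamma_ofReal] at h2
    rw [h2, show ((u:ℂ) + v) = ((u + v : ℝ) : ℂ) by push_cast; ring, Complex.Gamma_ofReal]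
  have h4 : Real.Gamma u * Real.Gamma v
      = Real.Gamma (u + v) * ∫ x in (0:ℝ)..1, x ^ (u-1) * (1-x) ^ (v-1) := by
    exact_mod_cast h3
  have hG : Real.Gamma (u + v) ≠ 0 := (Real.Gamma_pos_of_pos (by linarith)).ne'
  rw [h4]
  field_simp

/-- Scaled Beta integral. -/
lemma scaled_beta {p q t : ℝ} (hp : 0 < p) (hq : 0 < q) (ht : 0 < t) :
    ∫ s in (0:ℝ)..t, s ^ (p - 1) * (t - s) ^ (q - 1)
      = Real.Gamma p * Real.Gamma q / Real.Gamma (p + q) * t ^ (p + q - 1) := by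
  have h0 := intervalIntegral.integral_comp_mul_left (a := 0) (b := 1)
    (fun s => s ^ (p-1) * (t-s) ^ (q-1)) ht.ne'
  simp only [mul_zero, mul_one, smul_eq_mul] at h0
  have h1 : (∫ x in (0:ℝ)..1, (t * x) ^ (p-1) * (t - t * x) ^ (q-1))
      = ∫ x in (0:ℝ)..1, t ^ (p + q - 2) * (x ^ (p-1) * (1-x) ^ (q-1)) := by
    refine intervalIntegral.integral_congr fun x hx => ?_
    rw [uIcc_of_le (by norm_num : (0:ℝ) ≤ 1)] at hx
    rw [show t - t * x = t * (1 - x) by ring,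
      Real.mul_rpow ht.le hx.1, Real.mul_rpow ht.le (by linarith [hx.2]),
      show t ^ (p+q-2) = t ^ (p-1) * t ^ (q-1) by rw [← Real.rpow_add ht]; ring_nf]
    ring
  rw [intervalIntegral.integral_const_mul, real_beta hp hq] at h1
  rw [h1] at h0
  have hI : (∫ s in (0:ℝ)..t, s ^ (p-1) * (t-s) ^ (q-1))
      = t * (t ^ (p + q - 2) * (Real.Gamma p * Real.Gamma q / Real.Gamma (p + q))) := by
    have hG : Real.Gamma (p+q) ≠ 0 := (Real.Gamma_pos_of_pos (by linarith)).ne'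
    field_simp at h0 ⊢
    linarith [h0]
  rw [hI, show t ^ (p+q-1) = t * t ^ (p+q-2) by
    nth_rewrite 2 [← Real.rpow_one t]
    rw [← Real.rpow_add ht]; ring_nf]
  ring

/-- Key Gamma inequality from log-convexity. -/
lemma gamma_key {α x : ℝ} (hα0 : 0 < α) (hα1 : α ≤ 1) (hx : 0 < x) :
    Real.Gamma (x + 1 - α) * x ^ α ≤ Real.Gamma (x + 1) := by
  rcases eq_or_lt_of_le hα1 with h1 | h1
  · subst h1
    rw [Real.rpow_one, add_sub_cancel_right, mul_comm, ← Real.Gamma_add_one hx.ne']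
  · have key := Real.Gamma_mul_add_mul_le_rpow_Gamma_mul_rpow_Gamma
      (s := x) (t := x + 1) (a := α) (b := 1 - α) hx (by linarith) hα0 (by linarith) (by ring)
    have e1 : α * x + (1 - α) * (x + 1) = x + 1 - α := by ring
    rw [e1] at key
    have hGx : 0 < Real.Gamma x := Real.Gamma_pos_of_pos hx
    have hGx1 : 0 < Real.Gamma (x + 1) := Real.Gamma_pos_of_pos (by linarith)
    have e2 : Real.Gamma x = Real.Gamma (x + 1) / x := by
      rw [Real.Gamma_add_one hx.ne']; field_simp
    have e3 : Real.Gamma x ^ α * Real.Gamma (x+1) ^ (1-α) = Real.Gamma (x+1) / x ^ α := by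
      rw [e2, Real.div_rpow hGx1.le hx.le, div_mul_eq_mul_div,
        ← Real.rpow_add hGx1]
      norm_num
    rw [e3] at key
    have hxα : 0 < x ^ α := Real.rpow_pos_of_pos hx α
    calc Real.Gamma (x + 1 - α) * x ^ α ≤ (Real.Gamma (x+1) / x ^ α) * x ^ α :=
          mul_le_mul_of_nonneg_right key hxα.le
      _ = Real.Gamma (x+1) := by field_simp

/-- Summability of the Mittag-Leffler series. -/
lemma summable_ml {α : ℝ} (hα0 : 0 < α) (hα1 : α ≤ 1) (z : ℝ) :
    Summable (fun n : ℕ => z ^ n / Real.Gamma (α * n + 1)) := by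
  apply summable_of_ratio_norm_eventually_le (r := 1/2) (by norm_num)
  have htend : Tendsto (fun n : ℕ => (α * n + α) ^ α) atTop atTop := by
    apply (tendsto_rpow_atTop hα0).comp
    apply tendsto_atTop_add_const_right
    exact (tendsto_natCast_atTop_atTop (R := ℝ)).const_mul_atTop hα0
  filter_upwards [htend.eventually_ge_atTop (2 * |z|)] with n hn
  have hxn : (0:ℝ) < α * n + α := by positivity
  have key := gamma_key hα0 hα1 hxn
  have e1 : α * n + α + 1 - α = α * n + 1 := by ring
  rw [e1] at key
  have hcn : 0 < Real.Gamma (α * n + 1) := Real.Gamma_pos_of_pos (by positivity)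
  have hcn1 : 0 < Real.Gamma (α * (n+1 : ℕ) + 1) := Real.Gamma_pos_of_pos (by positivity)
  have e2 : α * (n+1 : ℕ) + 1 = α * n + α + 1 := by push_cast; ring
  -- 2|z| * Γ(αn+1) ≤ Γ(α(n+1)+1)
  have h2 : 2 * |z| * Real.Gamma (α * n + 1) ≤ Real.Gamma (α * (n+1 : ℕ) + 1) := by
    rw [e2]
    calc 2 * |z| * Real.Gamma (α * n + 1)
        ≤ (α * n + α) ^ α * Real.Gamma (α * n + 1) :=
          mul_le_mul_of_nonneg_right hn hcn.le
      _ ≤ Real.Gamma (α * n + α + 1) := by rw [mul_comm]; exact key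
  rw [norm_div, norm_div, Real.norm_of_nonneg hcn.le, Real.norm_of_nonneg hcn1.le]
  have hzn : ‖z ^ (n+1)‖ = |z| * ‖z ^ n‖ := by
    rw [norm_pow, norm_pow, pow_succ]
    simp [Real.norm_eq_abs, mul_comm]
  by_cases hz : z = 0
  · subst hz
    rw [hzn]
    simp only [abs_zero, zero_mul, zero_div]
    positivity
  · have hza : 0 < |z| := abs_pos.mpr hz
    have hden : 0 < 2 * |z| * Real.Gamma (α * n + 1) := by positivity
    calc ‖z ^ (n+1)‖ / Real.Gamma (α * (n+1 : ℕ) + 1)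
        ≤ (|z| * ‖z ^ n‖) / (2 * |z| * Real.Gamma (α * n + 1)) := by
          rw [hzn]
          exact div_le_div_of_nonneg_left (by positivity) hden h2
      _ = 1/2 * (‖z ^ n‖ / Real.Gamma (α * n + 1)) := by
          field_simp

/-- The Mittag-Leffler function E_α(z) = Σ zⁿ/Γ(αn+1). -/
noncomputable def mittagLeffler (α z : ℝ) : ℝ :=
  ∑' n : ℕ, z ^ n / Real.Gamma (α * n + 1)

/-- For 0 < α ≤ 1, g(t) = E_α(-t^α) satisfies g + g∗(t^{α-1}/Γ(α)) = 1. -/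
theorem mittagLeffler_decomposition (α : ℝ) (hα0 : 0 < α) (hα1 : α ≤ 1) :
    ∀ t > (0:ℝ),
      mittagLeffler α (-(t ^ α)) +
        (∫ s in (0:ℝ)..t,
          mittagLeffler α (-(s ^ α)) * ((t - s) ^ (α - 1) / Real.Gamma α)) = 1 := by
  intro t ht
  have hΓα : 0 < Real.Gamma α := Real.Gamma_pos_of_pos hα0
  set μ : Measure ℝ := volume.restrict (Ioc 0 t) with hμ
  set c : ℕ → ℝ := fun n => Real.Gamma (α * n + 1) with hc
  have hcpos : ∀ n : ℕ, 0 < c n := fun n => Real.Gamma_pos_of_pos (by positivity)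
  set F : ℕ → ℝ → ℝ :=
    fun n s => (-(s ^ α)) ^ n / c n * ((t - s) ^ (α - 1) / Real.Gamma α) with hF
  set G : ℕ → ℝ → ℝ := fun n s => s ^ (α * n) * (t - s) ^ (α - 1) with hG
  -- base integrability of (t-s)^(α-1)
  have hbase : IntegrableOn (fun s => (t - s) ^ (α - 1)) (Ioc 0 t) := by
    have h1 : IntervalIntegrable (fun x : ℝ => x ^ (α - 1)) volume 0 t :=
      intervalIntegral.intervalIntegrable_rpow' (by linarith)
    have h2 := h1.comp_sub_left t
    simp only [sub_zero, sub_self] at h2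
    rw [← intervalIntegrable_iff_integrableOn_Ioc_of_le ht.le]
    exact h2.symm
  -- integrability of G n
  have hIntG : ∀ n : ℕ, Integrable (G n) μ := by
    intro n
    apply Integrable.bdd_mul (c := t ^ (α * n)) hbase
    · exact (continuousOn_of_forall_continuousAt fun x hx =>
        Real.continuousAt_rpow_const x _ (Or.inl hx.1.ne')).aestronglyMeasurable
        measurableSet_Ioc
    · filter_upwards [ae_restrict_mem measurableSet_Ioc] with s hs
      rw [Real.norm_of_nonneg (Real.rpow_nonneg hs.1.le _)]
      exact Real.rpow_le_rpow hs.1.le hs.2 (by positivity)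
  -- F n a.e. equals a constant multiple of G n
  have hFeq : ∀ n : ℕ, F n =ᵐ[μ] fun s => ((-1 : ℝ) ^ n / (c n * Real.Gamma α)) * G n s := by
    intro n
    filter_upwards [ae_restrict_mem measurableSet_Ioc] with s hs
    have hpow : (-(s ^ α)) ^ n = (-1 : ℝ) ^ n * s ^ (α * n) := by
      rw [neg_pow, ← Real.rpow_natCast (s ^ α) n, ← Real.rpow_mul hs.1.le]
    simp only [hF, hG, hpow]
    ring
  have hIntF : ∀ n : ℕ, Integrable (F n) μ :=
    fun n => (((hIntG n).const_mul _).congr (hFeq n).symm)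
  -- the value of ∫ G n
  have hJ : ∀ n : ℕ, ∫ s, G n s ∂μ
      = c n * Real.Gamma α / Real.Gamma (α * (n + 1 : ℕ) + 1) * t ^ (α * (n + 1 : ℕ)) := by
    intro n
    rw [hμ, ← intervalIntegral.integral_of_le ht.le]
    have := scaled_beta (p := α * n + 1) (q := α) (by positivity) hα0 ht
    have e1 : ∀ s : ℝ, s ^ (α * n + 1 - 1) = s ^ (α * n) := by
      intro s; norm_num
    simp only [e1] at this
    rw [hG]
    simp only
    rw [this]
    have e2 : α * n + 1 + α = α * (n + 1 : ℕ) + 1 := by push_cast; ring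
    have e3 : α * n + 1 + α - 1 = α * (n + 1 : ℕ) := by push_cast; ring
    rw [e2]
    norm_num [hc]
  -- integral of the norm of F n
  have hnorm : ∀ n : ℕ, ∫ s, ‖F n s‖ ∂μ
      = t ^ (α * (n + 1 : ℕ)) / Real.Gamma (α * (n + 1 : ℕ) + 1) := by
    intro n
    have heq : (fun s => ‖F n s‖) =ᵐ[μ] fun s => (1 / (c n * Real.Gamma α)) * G n s := by
      filter_upwards [hFeq n, ae_restrict_mem measurableSet_Ioc] with s h1 hs
      rw [h1, norm_mul, norm_div, norm_pow, norm_neg, norm_one, one_pow,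
        Real.norm_of_nonneg (by positivity : (0:ℝ) ≤ c n * Real.Gamma α),
        Real.norm_of_nonneg (mul_nonneg (Real.rpow_nonneg hs.1.le _)
          (Real.rpow_nonneg (by linarith [hs.2] : (0:ℝ) ≤ t - s) _))]
      try ring
    rw [integral_congr_ae heq, integral_const_mul, hJ n]
    have h1 : 0 < Real.Gamma (α * (n + 1 : ℕ) + 1) := Real.Gamma_pos_of_pos (by positivity)
    have h2 := (hcpos n).ne'
    field_simp
    try ring
  -- summability of norms
  have hsum : Summable (fun n : ℕ => ∫ s, ‖F n s‖ ∂μ) := by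
    simp only [hnorm]
    have hS := summable_ml hα0 hα1 (t ^ α)
    have hS1 : Summable (fun n : ℕ => (t ^ α) ^ (n + 1) / Real.Gamma (α * (n + 1 : ℕ) + 1)) := by
      exact_mod_cast (summable_nat_add_iff (f := fun n : ℕ => (t ^ α) ^ n / Real.Gamma (α * n + 1)) 1).mpr hS
    refine hS1.congr fun n => ?_
    congr 1
    rw [← Real.rpow_natCast (t ^ α) (n + 1), ← Real.rpow_mul ht.le]
  -- swap sum and integral
  have hswap := integral_tsum_of_summable_integral_norm hIntF hsum
  -- value of ∫ F n
  set a : ℕ → ℝ := fun n => (-(t ^ α)) ^ n / c n with ha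
  have hFint : ∀ n : ℕ, ∫ s, F n s ∂μ = -(a (n + 1)) := by
    intro n
    rw [integral_congr_ae (hFeq n), integral_const_mul, hJ n]
    have h1 : 0 < Real.Gamma (α * (n + 1 : ℕ) + 1) := Real.Gamma_pos_of_pos (by positivity)
    have hpow : (-(t ^ α)) ^ (n + 1) = -((-1 : ℝ) ^ n * t ^ (α * (n + 1 : ℕ))) := by
      rw [neg_pow, ← Real.rpow_natCast (t ^ α) (n + 1), ← Real.rpow_mul ht.le, pow_succ]
      push_cast
      ring
    simp only [ha, hc, hpow]
    have hcn : c n ≠ 0 := (hcpos n).ne'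
    field_simp
  -- pointwise identity of the integrand
  have hptwise : ∀ s : ℝ,
      mittagLeffler α (-(s ^ α)) * ((t - s) ^ (α - 1) / Real.Gamma α) = ∑' n, F n s := by
    intro s
    rw [mittagLeffler, ← tsum_mul_right]
  -- the interval integral
  have hint : (∫ s in (0:ℝ)..t,
      mittagLeffler α (-(s ^ α)) * ((t - s) ^ (α - 1) / Real.Gamma α))
      = ∑' n, ∫ s, F n s ∂μ := by
    calc (∫ s in (0:ℝ)..t,
          mittagLeffler α (-(s ^ α)) * ((t - s) ^ (α - 1) / Real.Gamma α))
        = ∫ s, (∑' n, F n s) ∂μ := by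
          rw [intervalIntegral.integral_of_le ht.le]
          exact integral_congr_ae (ae_of_all _ fun s => hptwise s)
      _ = ∑' n, ∫ s, F n s ∂μ := hswap.symm
  rw [hint, tsum_congr hFint, tsum_neg]
  have hsa : Summable a := summable_ml hα0 hα1 (-(t ^ α))
  have h0 : mittagLeffler α (-(t ^ α)) = ∑' n, a n := rfl
  have hz := hsa.tsum_eq_zero_add
  have ha0 : a 0 = 1 := by simp [ha, hc, Real.Gamma_one]
  rw [h0]
  linarith [hz, ha0]
end
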